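/- Let H be a finitely generated group whose commutator subgroup [H,H] is finite. Then the center Z(H) has finite index in H. -/

import Mathlib

theorem stmt2 {H : Type*} [Group H] [Group.FG H]
    (hcomm : (commutator H : Set H).Finite) :
    (Subgroup.center H).FiniteIndex := by
  have : Finite (commutatorSet H) := by
    refine (hcomm.subset fun x hx => ?_).to_subtype
    rw [SetLike.mem_coe, commutator_eq_closure]
    exact Subgroup.subset_closure hx
  exact Subgroup.finiteIndex_center
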